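/- For a classical channel W with W(y|x) > 0 and distribution P: sup_{ρ≥0} [min_V (D(V‖W|P) + ρ I(P,V)) − ρR] = min_{V : I(P,V) ≤ R} D(V‖W|P), for every R > 0. -/

import Mathlib

open Finset

variable {X Y : Type*} [Fintype X] [Fintype Y]

def IsProb {Z : Type*} [Fintype Z] (P : Z → ℝ) : Prop :=
  (∀ z, 0 ≤ P z) ∧ ∑ z, P z = 1

def IsChannel (V : X → Y → ℝ) : Prop :=
  ∀ x, IsProb (V x)

noncomputable def condKL (P : X → ℝ) (V W : X → Y → ℝ) : ℝ :=
  ∑ x, ∑ y, P x * V x y * Real.log (V x y / W x y)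

noncomputable def mutInf (P : X → ℝ) (V : X → Y → ℝ) : ℝ :=
  ∑ x, ∑ y, P x * V x y * Real.log (V x y / ∑ x', P x' * V x' y)


lemma sub_le_mul_log' (a b : ℝ) (ha : 0 ≤ a) (hb : 0 ≤ b) (h0 : b = 0 → a = 0) :
    a - b ≤ a * Real.log (a / b) := by
  rcases eq_or_lt_of_le hb with hb0 | hbpos
  · have := h0 hb0.symm; simp [this, ← hb0]
  rcases eq_or_lt_of_le ha with ha0 | hapos
  · simp [← ha0]; linarith
  · have h1 : Real.log (b / a) ≤ b / a - 1 := Real.log_le_sub_one_of_pos (by positivity)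
    have h2 : Real.log (a / b) = - Real.log (b / a) := by
      rw [← Real.log_inv]; congr 1; field_simp
    rw [h2]
    nlinarith [mul_le_mul_of_nonneg_left h1 ha, mul_div_cancel₀ b (ne_of_gt hapos)]

lemma logsum2 (a1 a2 b1 b2 : ℝ) (ha1 : 0 ≤ a1) (ha2 : 0 ≤ a2) (hb1 : 0 ≤ b1) (hb2 : 0 ≤ b2)
    (h1 : b1 = 0 → a1 = 0) (h2 : b2 = 0 → a2 = 0) :
    (a1 + a2) * Real.log ((a1 + a2) / (b1 + b2)) ≤
      a1 * Real.log (a1 / b1) + a2 * Real.log (a2 / b2) := by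
  rcases eq_or_lt_of_le hb1 with hb10 | hb1p
  · have := h1 hb10.symm; simp [this, ← hb10]
  rcases eq_or_lt_of_le hb2 with hb20 | hb2p
  · have := h2 hb20.symm; simp [this, ← hb20]
  rcases eq_or_lt_of_le ha1 with ha10 | ha1p
  · simp [← ha10]
    rcases eq_or_lt_of_le ha2 with ha20 | ha2p
    · simp [← ha20]
    · have : Real.log (a2 / (b1 + b2)) ≤ Real.log (a2 / b2) := by
        apply Real.log_le_log (by positivity)
        apply div_le_div_of_nonneg_left ha2p.le hb2p (by linarith)
      exact mul_le_mul_of_nonneg_left this ha2  -- careful order: a2 * log ≤ a2 * log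
  rcases eq_or_lt_of_le ha2 with ha20 | ha2p
  · simp [← ha20]
    have : Real.log (a1 / (b1 + b2)) ≤ Real.log (a1 / b1) := by
      apply Real.log_le_log (by positivity)
      apply div_le_div_of_nonneg_left ha1p.le hb1p (by linarith)
    exact mul_le_mul_of_nonneg_left this ha1
  · -- all positive
    set s := a1 + a2 with hs
    set t := b1 + b2 with ht
    have hsp : 0 < s := by positivity
    have htp : 0 < t := by positivity
    have key : ∀ a b : ℝ, 0 < a → 0 < b →
        a * Real.log (s / t) - a * Real.log (a / b) ≤ s * b / t - a := by
      intro a b hap hbp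
      have hlog : Real.log (s / t) - Real.log (a / b) = Real.log ((s * b) / (t * a)) := by
        rw [← Real.log_div (by positivity) (by positivity)]
        congr 1
        field_simp
        try ring
      have h3 : Real.log ((s * b) / (t * a)) ≤ (s * b) / (t * a) - 1 :=
        Real.log_le_sub_one_of_pos (by positivity)
      have := mul_le_mul_of_nonneg_left h3 hap.le
      calc a * Real.log (s / t) - a * Real.log (a / b)
          = a * Real.log ((s * b) / (t * a)) := by rw [← hlog]; ring
        _ ≤ a * ((s * b) / (t * a) - 1) := this
        _ = s * b / t - a := by field_simp
    have k1 := key a1 b1 ha1p hb1p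
    have k2 := key a2 b2 ha2p hb2p
    have : s * b1 / t + s * b2 / t = s := by field_simp [ht]; ring
    nlinarith [k1, k2]

lemma scaled_log (c v q : ℝ) : (c * v) * Real.log ((c * v) / (c * q)) = c * (v * Real.log (v / q)) := by
  rcases eq_or_ne c 0 with h | h
  · simp [h]
  · rw [mul_div_mul_left v q h]; ring

lemma isChannel_mix (V1 V2 : X → Y → ℝ) (h1 : IsChannel V1) (h2 : IsChannel V2)
    (l : ℝ) (hl0 : 0 ≤ l) (hl1 : l ≤ 1) :
    IsChannel (fun x y => l * V1 x y + (1 - l) * V2 x y) := by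
  intro x
  constructor
  · intro y
    have a := (h1 x).1 y
    have b := (h2 x).1 y
    show 0 ≤ l * V1 x y + (1 - l) * V2 x y
    nlinarith
  · rw [Finset.sum_add_distrib, ← Finset.mul_sum, ← Finset.mul_sum, (h1 x).2, (h2 x).2]
    ring

lemma condKL_mix (P : X → ℝ) (W V1 V2 : X → Y → ℝ) (hP : ∀ x, 0 ≤ P x)
    (hWpos : ∀ x y, 0 < W x y) (h1 : IsChannel V1) (h2 : IsChannel V2)
    (l : ℝ) (hl0 : 0 ≤ l) (hl1 : l ≤ 1) :
    condKL P (fun x y => l * V1 x y + (1 - l) * V2 x y) W ≤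
      l * condKL P V1 W + (1 - l) * condKL P V2 W := by
  rw [condKL, condKL, condKL, Finset.mul_sum, Finset.mul_sum, ← Finset.sum_add_distrib]
  apply Finset.sum_le_sum; intro x _
  rw [Finset.mul_sum, Finset.mul_sum, ← Finset.sum_add_distrib]
  apply Finset.sum_le_sum; intro y _
  have hw := hWpos x y
  have hv1 := (h1 x).1 y
  have hv2 := (h2 x).1 y
  have hb1 : l * W x y = 0 → l * V1 x y = 0 := by
    intro h
    rcases mul_eq_zero.1 h with h | h
    · simp [h]
    · exact absurd h (ne_of_gt hw)
  have hb2 : (1 - l) * W x y = 0 → (1 - l) * V2 x y = 0 := by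
    intro h
    rcases mul_eq_zero.1 h with h | h
    · simp [h]
    · exact absurd h (ne_of_gt hw)
  have key := logsum2 (l * V1 x y) ((1 - l) * V2 x y) (l * W x y) ((1 - l) * W x y)
    (mul_nonneg hl0 hv1) (mul_nonneg (by linarith) hv2)
    (mul_nonneg hl0 hw.le) (mul_nonneg (by linarith) hw.le) hb1 hb2
  rw [scaled_log, scaled_log] at key
  have hbsum : l * W x y + (1 - l) * W x y = W x y := by ring
  rw [hbsum] at key
  have := mul_le_mul_of_nonneg_left key (hP x)
  calc P x * (l * V1 x y + (1 - l) * V2 x y) *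
        Real.log ((l * V1 x y + (1 - l) * V2 x y) / W x y)
      = P x * ((l * V1 x y + (1 - l) * V2 x y) *
        Real.log ((l * V1 x y + (1 - l) * V2 x y) / W x y)) := by ring
    _ ≤ P x * (l * (V1 x y * Real.log (V1 x y / W x y)) +
        (1 - l) * (V2 x y * Real.log (V2 x y / W x y))) := this
    _ = l * (P x * V1 x y * Real.log (V1 x y / W x y)) +
        (1 - l) * (P x * V2 x y * Real.log (V2 x y / W x y)) := by ring

lemma mutInf_mix (P : X → ℝ) (V1 V2 : X → Y → ℝ) (hP : ∀ x, 0 ≤ P x)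
    (h1 : IsChannel V1) (h2 : IsChannel V2) (l : ℝ) (hl0 : 0 ≤ l) (hl1 : l ≤ 1) :
    mutInf P (fun x y => l * V1 x y + (1 - l) * V2 x y) ≤
      l * mutInf P V1 + (1 - l) * mutInf P V2 := by
  rw [mutInf, mutInf, mutInf, Finset.mul_sum, Finset.mul_sum, ← Finset.sum_add_distrib]
  apply Finset.sum_le_sum; intro x _
  rw [Finset.mul_sum, Finset.mul_sum, ← Finset.sum_add_distrib]
  apply Finset.sum_le_sum; intro y _
  set q1 : ℝ := ∑ x', P x' * V1 x' y with hq1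
  set q2 : ℝ := ∑ x', P x' * V2 x' y with hq2
  have hq1n : 0 ≤ q1 := Finset.sum_nonneg fun x' _ => mul_nonneg (hP x') ((h1 x').1 y)
  have hq2n : 0 ≤ q2 := Finset.sum_nonneg fun x' _ => mul_nonneg (hP x') ((h2 x').1 y)
  have hqmix : (∑ x', P x' * (l * V1 x' y + (1 - l) * V2 x' y)) = l * q1 + (1 - l) * q2 := by
    rw [hq1, hq2, Finset.mul_sum, Finset.mul_sum, ← Finset.sum_add_distrib]
    apply Finset.sum_congr rfl; intros; ring
  rw [hqmix]
  rcases eq_or_lt_of_le (hP x) with hpx | hpx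
  · simp [← hpx]
  have hpx' : P x ≠ 0 := ne_of_gt hpx
  have hv1 := (h1 x).1 y
  have hv2 := (h2 x).1 y
  have hb1 : l * (P x * q1) = 0 → l * (P x * V1 x y) = 0 := by
    intro h
    rcases mul_eq_zero.1 h with h | h
    · simp [h]
    · have hq10 : q1 = 0 := by
        rcases mul_eq_zero.1 h with h' | h'
        · exact absurd h' hpx'
        · exact h'
      have : P x * V1 x y = 0 := by
        have h0 : ∑ x', P x' * V1 x' y = 0 := by rw [← hq1]; exact hq10
        exact (Finset.sum_eq_zero_iff_of_nonneg
          (fun x' _ => mul_nonneg (hP x') ((h1 x').1 y))).1 h0 x (Finset.mem_univ x)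
      simp [this]
  have hb2 : (1 - l) * (P x * q2) = 0 → (1 - l) * (P x * V2 x y) = 0 := by
    intro h
    rcases mul_eq_zero.1 h with h | h
    · simp [h]
    · have hq20 : q2 = 0 := by
        rcases mul_eq_zero.1 h with h' | h'
        · exact absurd h' hpx'
        · exact h'
      have : P x * V2 x y = 0 := by
        have h0 : ∑ x', P x' * V2 x' y = 0 := by rw [← hq2]; exact hq20
        exact (Finset.sum_eq_zero_iff_of_nonneg
          (fun x' _ => mul_nonneg (hP x') ((h2 x').1 y))).1 h0 x (Finset.mem_univ x)
      simp [this]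
  have key := logsum2 (l * (P x * V1 x y)) ((1 - l) * (P x * V2 x y))
    (l * (P x * q1)) ((1 - l) * (P x * q2))
    (mul_nonneg hl0 (mul_nonneg hpx.le hv1)) (mul_nonneg (by linarith) (mul_nonneg hpx.le hv2))
    (mul_nonneg hl0 (mul_nonneg hpx.le hq1n)) (mul_nonneg (by linarith) (mul_nonneg hpx.le hq2n)) hb1 hb2
  have e1 : l * (P x * V1 x y) * Real.log ((l * (P x * V1 x y)) / (l * (P x * q1)))
      = l * (P x * V1 x y * Real.log (V1 x y / q1)) := by
    rw [scaled_log, scaled_log]; ring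
  have e2 : (1 - l) * (P x * V2 x y) * Real.log (((1 - l) * (P x * V2 x y)) / ((1 - l) * (P x * q2)))
      = (1 - l) * (P x * V2 x y * Real.log (V2 x y / q2)) := by
    rw [scaled_log, scaled_log]; ring
  rw [e1, e2] at key
  calc P x * (l * V1 x y + (1 - l) * V2 x y) *
        Real.log ((l * V1 x y + (1 - l) * V2 x y) / (l * q1 + (1 - l) * q2))
      = (l * (P x * V1 x y) + (1 - l) * (P x * V2 x y)) *
        Real.log ((l * (P x * V1 x y) + (1 - l) * (P x * V2 x y)) /
          (l * (P x * q1) + (1 - l) * (P x * q2))) := by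
        rw [show l * (P x * V1 x y) + (1 - l) * (P x * V2 x y)
              = P x * (l * V1 x y + (1 - l) * V2 x y) from by ring,
            show l * (P x * q1) + (1 - l) * (P x * q2)
              = P x * (l * q1 + (1 - l) * q2) from by ring,
            mul_div_mul_left _ _ hpx']
        try ring
    _ ≤ l * (P x * V1 x y * Real.log (V1 x y / q1)) +
        (1 - l) * (P x * V2 x y * Real.log (V2 x y / q2)) := key

lemma condKL_nonneg (P : X → ℝ) (V W : X → Y → ℝ) (hP : ∀ x, 0 ≤ P x)
    (hV : IsChannel V) (hW : IsChannel W) (hWpos : ∀ x y, 0 < W x y) :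
    0 ≤ condKL P V W := by
  rw [condKL]
  apply Finset.sum_nonneg; intro x _
  have : ∑ y, P x * (V x y - W x y) ≤ ∑ y, P x * V x y * Real.log (V x y / W x y) := by
    apply Finset.sum_le_sum; intro y _
    have h := sub_le_mul_log' (V x y) (W x y) ((hV x).1 y) (hWpos x y).le
      (fun h => absurd h (ne_of_gt (hWpos x y)))
    calc P x * (V x y - W x y) ≤ P x * (V x y * Real.log (V x y / W x y)) :=
          mul_le_mul_of_nonneg_left h (hP x)
      _ = P x * V x y * Real.log (V x y / W x y) := by ring
  refine le_trans (le_of_eq ?_) this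
  rw [← Finset.mul_sum, Finset.sum_sub_distrib, (hV x).2, (hW x).2, sub_self, mul_zero]

lemma mutInf_nonneg (P : X → ℝ) (V : X → Y → ℝ) (hP : IsProb P) (hV : IsChannel V) :
    0 ≤ mutInf P V := by
  rw [mutInf]
  have key : ∀ x y, P x * V x y - P x * (∑ x', P x' * V x' y) ≤
      P x * V x y * Real.log (V x y / ∑ x', P x' * V x' y) := by
    intro x y
    rcases eq_or_lt_of_le (hP.1 x) with hpx | hpx
    · simp [← hpx]
    · have hq : 0 ≤ ∑ x', P x' * V x' y :=
        Finset.sum_nonneg fun x' _ => mul_nonneg (hP.1 x') ((hV x').1 y)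
      have h0 : (∑ x', P x' * V x' y) = 0 → V x y = 0 := by
        intro h
        have := (Finset.sum_eq_zero_iff_of_nonneg
          (fun x' _ => mul_nonneg (hP.1 x') ((hV x').1 y))).1 h x (Finset.mem_univ x)
        rcases mul_eq_zero.1 this with h' | h'
        · exact absurd h' (ne_of_gt hpx)
        · exact h'
      have h := sub_le_mul_log' (V x y) (∑ x', P x' * V x' y) ((hV x).1 y) hq h0
      calc P x * V x y - P x * (∑ x', P x' * V x' y)
          = P x * (V x y - ∑ x', P x' * V x' y) := by ring
        _ ≤ P x * (V x y * Real.log (V x y / ∑ x', P x' * V x' y)) :=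
            mul_le_mul_of_nonneg_left h (hP.1 x)
        _ = P x * V x y * Real.log (V x y / ∑ x', P x' * V x' y) := by ring
  have sum1 : ∑ x, ∑ y, (P x * V x y - P x * (∑ x', P x' * V x' y)) = 0 := by
    have e1 : ∑ x, ∑ y, P x * V x y = 1 := by
      have : ∀ x, ∑ y, P x * V x y = P x := by
        intro x; rw [← Finset.mul_sum, (hV x).2, mul_one]
      simp [this, hP.2]
    have e2 : ∑ x, ∑ y, P x * (∑ x', P x' * V x' y) = 1 := by
      have : ∀ x, ∑ y, P x * (∑ x', P x' * V x' y)
          = P x * ∑ y, (∑ x', P x' * V x' y) := by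
        intro x; rw [Finset.mul_sum]
      rw [Finset.sum_congr rfl fun x _ => this x, ← Finset.sum_mul]
      rw [hP.2, one_mul, Finset.sum_comm]
      have : ∀ x', ∑ y, P x' * V x' y = P x' := by
        intro x'; rw [← Finset.mul_sum, (hV x').2, mul_one]
      simp [this, hP.2]
    simp [Finset.sum_sub_distrib, e1, e2]
  calc (0:ℝ) = ∑ x, ∑ y, (P x * V x y - P x * (∑ x', P x' * V x' y)) := sum1.symm
    _ ≤ ∑ x, ∑ y, P x * V x y * Real.log (V x y / ∑ x', P x' * V x' y) := by
        apply Finset.sum_le_sum; intro x _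
        apply Finset.sum_le_sum; intro y _
        exact key x y

lemma uniform_channel [Nonempty Y] :
    IsChannel (fun (_ : X) (_ : Y) => ((Fintype.card Y : ℝ))⁻¹) := by
  intro x
  constructor
  · intro y; positivity
  · rw [Finset.sum_const, Finset.card_univ, nsmul_eq_mul]
    have : (Fintype.card Y : ℝ) ≠ 0 := by
      simp [Fintype.card_ne_zero]
    field_simp

lemma mutInf_uniform [Nonempty Y] (P : X → ℝ) (hP : IsProb P) :
    mutInf P (fun (_ : X) (_ : Y) => ((Fintype.card Y : ℝ))⁻¹) = 0 := by
  rw [mutInf]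
  apply Finset.sum_eq_zero; intro x _
  apply Finset.sum_eq_zero; intro y _
  have hq : (∑ x', P x' * ((Fintype.card Y : ℝ))⁻¹) = ((Fintype.card Y : ℝ))⁻¹ := by
    rw [← Finset.sum_mul, hP.2, one_mul]
  rw [hq]
  have hc : ((Fintype.card Y : ℝ))⁻¹ ≠ 0 := by
    have : (Fintype.card Y : ℝ) ≠ 0 := by simp [Fintype.card_ne_zero]
    simpa using this
  rw [div_self hc, Real.log_one, mul_zero]

noncomputable def cmin (P : X → ℝ) (W : X → Y → ℝ) (t : ℝ) : ℝ :=
  ⨅ V : {V : X → Y → ℝ // IsChannel V ∧ mutInf P V ≤ t}, condKL P V.1 W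

section CM

variable [Nonempty Y] {P : X → ℝ} {W : X → Y → ℝ}

lemma cm_nonempty (hP : IsProb P) {t : ℝ} (ht : 0 ≤ t) :
    Nonempty {V : X → Y → ℝ // IsChannel V ∧ mutInf P V ≤ t} :=
  ⟨⟨fun _ _ => (Fintype.card Y : ℝ)⁻¹, uniform_channel,
    by rw [mutInf_uniform P hP]; exact ht⟩⟩

lemma cm_bddBelow (hP : IsProb P) (hW : IsChannel W) (hWpos : ∀ x y, 0 < W x y) (t : ℝ) :
    BddBelow (Set.range fun V : {V : X → Y → ℝ // IsChannel V ∧ mutInf P V ≤ t} =>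
      condKL P V.1 W) := by
  refine ⟨0, ?_⟩
  rintro _ ⟨V, rfl⟩
  exact condKL_nonneg P V.1 W hP.1 V.2.1 hW hWpos

lemma cm_le (hP : IsProb P) (hW : IsChannel W) (hWpos : ∀ x y, 0 < W x y) {t : ℝ}
    {V : X → Y → ℝ} (hV : IsChannel V) (hVt : mutInf P V ≤ t) :
    cmin P W t ≤ condKL P V W :=
  ciInf_le (cm_bddBelow hP hW hWpos t) ⟨V, hV, hVt⟩

lemma le_cm (hP : IsProb P) {t a : ℝ} (ht : 0 ≤ t)
    (h : ∀ V : X → Y → ℝ, IsChannel V → mutInf P V ≤ t → a ≤ condKL P V W) :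
    a ≤ cmin P W t := by
  haveI : Nonempty {V : X → Y → ℝ // IsChannel V ∧ mutInf P V ≤ t} := cm_nonempty hP ht
  exact le_ciInf fun V => h V.1 V.2.1 V.2.2

lemma cm_nonneg (hP : IsProb P) (hW : IsChannel W) (hWpos : ∀ x y, 0 < W x y) {t : ℝ}
    (ht : 0 ≤ t) : 0 ≤ cmin P W t :=
  le_cm hP ht fun V hV _ => condKL_nonneg P V W hP.1 hV hW hWpos

lemma cm_mono (hP : IsProb P) (hW : IsChannel W) (hWpos : ∀ x y, 0 < W x y) {s t : ℝ}
    (hs : 0 ≤ s) (hst : s ≤ t) : cmin P W t ≤ cmin P W s :=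
  le_cm hP hs fun _ hV hVs => cm_le hP hW hWpos hV (le_trans hVs hst)

lemma cm_exists_lt (hP : IsProb P) {t ε : ℝ} (ht : 0 ≤ t) (hε : 0 < ε) :
    ∃ V : X → Y → ℝ, IsChannel V ∧ mutInf P V ≤ t ∧ condKL P V W < cmin P W t + ε := by
  haveI : Nonempty {V : X → Y → ℝ // IsChannel V ∧ mutInf P V ≤ t} := cm_nonempty hP ht
  have h : cmin P W t < cmin P W t + ε := by linarith
  obtain ⟨V, hV⟩ := exists_lt_of_ciInf_lt h
  exact ⟨V.1, V.2.1, V.2.2, hV⟩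

end CM

set_option maxHeartbeats 2000000 in
/-- for a strictly positive classical channel `W` and distribution `P`,
`sup_{ρ≥0} [min_V (D(V‖W|P) + ρ I(P,V)) − ρR] = min_{V : I(P,V) ≤ R} D(V‖W|P)`
for every `R > 0`. -/
theorem sphere_packing_sup_form_eq_Haroutunian [Nonempty X] [Nonempty Y]
    (W : X → Y → ℝ) (hW : IsChannel W) (hWpos : ∀ x y, 0 < W x y)
    (P : X → ℝ) (hP : IsProb P) (R : ℝ) (hR : 0 < R) :
    (⨆ ρ : {ρ : ℝ // 0 ≤ ρ},
      (⨅ V : {V : X → Y → ℝ // IsChannel V}, condKL P V.1 W + ρ.1 * mutInf P V.1)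
        - ρ.1 * R) =
    (⨅ V : {V : X → Y → ℝ // IsChannel V ∧ mutInf P V ≤ R}, condKL P V.1 W) := by
  classical
  have hrhs : (⨅ V : {V : X → Y → ℝ // IsChannel V ∧ mutInf P V ≤ R}, condKL P V.1 W)
      = cmin P W R := rfl
  rw [hrhs]
  set g : {ρ : ℝ // 0 ≤ ρ} → ℝ := fun ρ =>
    (⨅ V : {V : X → Y → ℝ // IsChannel V}, condKL P V.1 W + ρ.1 * mutInf P V.1)
      - ρ.1 * R with hg
  haveI hCne : Nonempty {V : X → Y → ℝ // IsChannel V} :=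
    ⟨⟨fun _ _ => (Fintype.card Y : ℝ)⁻¹, uniform_channel⟩⟩
  haveI hRne : Nonempty {ρ : ℝ // 0 ≤ ρ} := ⟨⟨0, le_refl 0⟩⟩
  have hInnerBdd : ∀ ρ : {ρ : ℝ // 0 ≤ ρ},
      BddBelow (Set.range fun V : {V : X → Y → ℝ // IsChannel V} =>
        condKL P V.1 W + ρ.1 * mutInf P V.1) := by
    intro ρ
    refine ⟨0, ?_⟩
    rintro _ ⟨V, rfl⟩
    have h1 := condKL_nonneg P V.1 W hP.1 V.2 hW hWpos
    have h2 := mutInf_nonneg P V.1 hP V.2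
    have := mul_nonneg ρ.2 h2
    positivity
  -- upper bound: every g ρ is at most cmin P W R
  have hub : ∀ ρ : {ρ : ℝ // 0 ≤ ρ}, g ρ ≤ cmin P W R := by
    intro ρ
    apply le_cm hP hR.le
    intro V hV hVR
    have h1 : (⨅ V : {V : X → Y → ℝ // IsChannel V}, condKL P V.1 W + ρ.1 * mutInf P V.1)
        ≤ condKL P V W + ρ.1 * mutInf P V := ciInf_le (hInnerBdd ρ) ⟨V, hV⟩
    have h2 : ρ.1 * mutInf P V ≤ ρ.1 * R := mul_le_mul_of_nonneg_left hVR ρ.2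
    simp only [hg]
    linarith
  have hBddAbove : BddAbove (Set.range g) := by
    refine ⟨cmin P W R, ?_⟩
    rintro _ ⟨ρ, rfl⟩
    exact hub ρ
  apply le_antisymm (ciSup_le hub)
  -- lower bound
  apply le_of_forall_pos_le_add
  intro ε hε
  set M : ℝ := cmin P W R with hMdef
  set M2 : ℝ := cmin P W (R / 2) with hM2def
  have hc : 0 ≤ M2 - M := by
    have := cm_mono (W := W) hP hW hWpos (by linarith : (0:ℝ) ≤ R / 2) (by linarith : R / 2 ≤ R)
    linarith
  set c : ℝ := M2 - M with hcdef
  set l : ℝ := min 1 (ε / (c + ε)) with hldef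
  have hl0 : 0 < l := lt_min one_pos (by positivity)
  have hl1 : l ≤ 1 := min_le_left _ _
  have hlc : l * c ≤ ε := by
    have h1 : l * c ≤ (ε / (c + ε)) * c :=
      mul_le_mul_of_nonneg_right (min_le_right _ _) hc
    have h2 : (ε / (c + ε)) * c ≤ ε := by
      rw [div_mul_eq_mul_div, mul_comm, ← div_mul_eq_mul_div]
      have : c / (c + ε) ≤ 1 := by
        rw [div_le_one (by linarith)]; linarith
      nlinarith
    exact le_trans h1 h2
  set δ : ℝ := l * (R / 2) with hδdef
  have hδ0 : 0 < δ := by positivity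
  have hδR2 : δ ≤ R / 2 := by nlinarith
  have hδR : δ < R := by linarith
  set M' : ℝ := cmin P W (R - δ) with hM'def
  have hM'M : M ≤ M' := cm_mono hP hW hWpos (by linarith) (by linarith)
  -- continuity step: M' ≤ M + ε
  have hM'ub : M' ≤ M + ε := by
    have key : ∀ η : ℝ, 0 < η → M' ≤ M + l * c + η := by
      intro η hη
      obtain ⟨Va, hVa, hVaI, hVaD⟩ := cm_exists_lt (W := W) hP (by linarith : (0:ℝ) ≤ R / 2) hη
      obtain ⟨Vb, hVb, hVbI, hVbD⟩ := cm_exists_lt (W := W) hP hR.le hη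
      set Vm : X → Y → ℝ := fun x y => l * Va x y + (1 - l) * Vb x y with hVm
      have hVmC : IsChannel Vm := isChannel_mix Va Vb hVa hVb l hl0.le hl1
      have hVmI : mutInf P Vm ≤ R - δ := by
        have h := mutInf_mix P Va Vb hP.1 hVa hVb l hl0.le hl1
        have h1 : l * mutInf P Va ≤ l * (R / 2) := mul_le_mul_of_nonneg_left hVaI hl0.le
        have h2 : (1 - l) * mutInf P Vb ≤ (1 - l) * R :=
          mul_le_mul_of_nonneg_left hVbI (by linarith)
        calc mutInf P Vm ≤ l * mutInf P Va + (1 - l) * mutInf P Vb := h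
          _ ≤ l * (R / 2) + (1 - l) * R := by linarith
          _ = R - δ := by rw [hδdef]; ring
      have hVmD : condKL P Vm W ≤ l * condKL P Va W + (1 - l) * condKL P Vb W :=
        condKL_mix P W Va Vb hP.1 hWpos hVa hVb l hl0.le hl1
      have h3 : M' ≤ condKL P Vm W := cm_le hP hW hWpos hVmC hVmI
      have h4 : l * condKL P Va W ≤ l * (M2 + η) := mul_le_mul_of_nonneg_left hVaD.le hl0.le
      have h5 : (1 - l) * condKL P Vb W ≤ (1 - l) * (M + η) :=
        mul_le_mul_of_nonneg_left hVbD.le (by linarith)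
      have : l * (M2 + η) + (1 - l) * (M + η) = M + l * c + η := by
        rw [hcdef]; ring
      linarith
    have : M' ≤ M + l * c := le_of_forall_pos_le_add fun η hη => by
      have := key η hη; linarith
    linarith
  set ρ : ℝ := (M' - M) / δ with hρdef
  have hρ0 : 0 ≤ ρ := by
    apply div_nonneg (by linarith) hδ0.le
  have hρδ : ρ * δ = M' - M := by
    rw [hρdef]; field_simp
  -- main pointwise bound
  have main : ∀ V : X → Y → ℝ, IsChannel V →
      M - ε + ρ * R ≤ condKL P V W + ρ * mutInf P V := by
    intro V hV
    set r : ℝ := mutInf P V with hrdef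
    set D : ℝ := condKL P V W with hDdef
    by_cases h1 : r < R - δ
    · -- r < R - δ : mix with near-optimal channel at level R
      have hμden : 0 < R - r := by linarith
      set μ : ℝ := δ / (R - r) with hμdef
      have hμ0 : 0 < μ := by positivity
      have hμ1 : μ < 1 := by
        rw [hμdef, div_lt_one hμden]; linarith
      have hμRr : μ * (R - r) = δ := by
        rw [hμdef]; exact div_mul_cancel₀ _ (ne_of_gt hμden)
      set η : ℝ := ε * μ / (1 - μ) with hηdef
      have hη0 : 0 < η := div_pos (by positivity) (by linarith)
      obtain ⟨V2, hV2, hV2I, hV2D⟩ := cm_exists_lt (W := W) hP hR.le hη0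
      set Vm : X → Y → ℝ := fun x y => μ * V x y + (1 - μ) * V2 x y with hVm
      have hVmC : IsChannel Vm := isChannel_mix V V2 hV hV2 μ hμ0.le hμ1.le
      have hVmI : mutInf P Vm ≤ R - δ := by
        have h := mutInf_mix P V V2 hP.1 hV hV2 μ hμ0.le hμ1.le
        have hb : (1 - μ) * mutInf P V2 ≤ (1 - μ) * R :=
          mul_le_mul_of_nonneg_left hV2I (by linarith)
        have e2 : μ * r + (1 - μ) * R = R - μ * (R - r) := by ring
        have e3 : R - μ * (R - r) = R - δ := by rw [hμRr]
        linarith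
      have hM'Vm : M' ≤ condKL P Vm W := cm_le hP hW hWpos hVmC hVmI
      have hVmD : condKL P Vm W ≤ μ * D + (1 - μ) * condKL P V2 W :=
        condKL_mix P W V V2 hP.1 hWpos hV hV2 μ hμ0.le hμ1.le
      have h5 : (1 - μ) * condKL P V2 W ≤ (1 - μ) * (M + η) :=
        mul_le_mul_of_nonneg_left hV2D.le (by linarith)
      have hην : (1 - μ) * η = ε * μ := by
        rw [hηdef, mul_comm]; exact div_mul_cancel₀ _ (ne_of_gt (by linarith : (0:ℝ) < 1 - μ))
      have key : μ * (M - ε) ≤ μ * (D + ρ * r - ρ * R) := by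
        have e : μ * (D + ρ * r - ρ * R) = μ * D - ρ * (μ * (R - r)) := by ring
        rw [e, hμRr, hρδ]
        nlinarith [hM'Vm, hVmD, h5, hην]
      have := (mul_le_mul_iff_right₀ hμ0).mp key
      linarith
    · push_neg at h1
      by_cases h2 : r ≤ R
      · -- middle case
        have hMD : M ≤ D := cm_le hP hW hWpos hV h2
        have h3 : ρ * (R - δ) ≤ ρ * r := mul_le_mul_of_nonneg_left h1 hρ0
        nlinarith
      · -- r > R : mix with near-optimal channel at level R - δ
        push_neg at h2
        have hνden : 0 < r - R + δ := by linarith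
        set ν : ℝ := δ / (r - R + δ) with hνdef
        have hν0 : 0 < ν := by positivity
        have hν1 : ν < 1 := by
          rw [hνdef, div_lt_one hνden]; linarith
        have hνe : ν * (r - R + δ) = δ := by
          rw [hνdef]; exact div_mul_cancel₀ _ (ne_of_gt hνden)
        set η : ℝ := ε * ν / (1 - ν) with hηdef
        have hη0 : 0 < η := div_pos (by positivity) (by linarith)
        obtain ⟨V1, hV1, hV1I, hV1D⟩ :=
          cm_exists_lt (W := W) hP (by linarith : (0:ℝ) ≤ R - δ) hη0
        set Vm : X → Y → ℝ := fun x y => ν * V x y + (1 - ν) * V1 x y with hVm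
        have hVmC : IsChannel Vm := isChannel_mix V V1 hV hV1 ν hν0.le hν1.le
        have hVmI : mutInf P Vm ≤ R := by
          have h := mutInf_mix P V V1 hP.1 hV hV1 ν hν0.le hν1.le
          have hb : (1 - ν) * mutInf P V1 ≤ (1 - ν) * (R - δ) :=
            mul_le_mul_of_nonneg_left hV1I (by linarith)
          have e2 : ν * r + (1 - ν) * (R - δ) = ν * (r - R + δ) + R - δ := by ring
          have e3 : ν * (r - R + δ) + R - δ = R := by rw [hνe]; ring
          linarith
        have hMVm : M ≤ condKL P Vm W := cm_le hP hW hWpos hVmC hVmI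
        have hVmD : condKL P Vm W ≤ ν * D + (1 - ν) * condKL P V1 W :=
          condKL_mix P W V V1 hP.1 hWpos hV hV1 ν hν0.le hν1.le
        have h5 : (1 - ν) * condKL P V1 W ≤ (1 - ν) * (M' + η) :=
          mul_le_mul_of_nonneg_left hV1D.le (by linarith)
        have hην : (1 - ν) * η = ε * ν := by
          rw [hηdef, mul_comm]; exact div_mul_cancel₀ _ (ne_of_gt (by linarith : (0:ℝ) < 1 - ν))
        have key : ν * (M - ε) ≤ ν * (D + ρ * r - ρ * R) := by
          have e : ν * (D + ρ * r - ρ * R)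
              = ν * D + ρ * (ν * (r - R + δ)) - ν * (ρ * δ) := by ring
          rw [e, hνe, hρδ]
          nlinarith [hMVm, hVmD, h5, hην]
        have := (mul_le_mul_iff_right₀ hν0).mp key
        linarith
  -- conclude
  have hlow : M - ε ≤ g ⟨ρ, hρ0⟩ := by
    simp only [hg]
    have : M - ε + ρ * R ≤
        ⨅ V : {V : X → Y → ℝ // IsChannel V}, condKL P V.1 W + ρ * mutInf P V.1 :=
      le_ciInf fun V => main V.1 V.2
    linarith
  have := le_ciSup hBddAbove ⟨ρ, hρ0⟩
  linarith
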